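/- Let k be a finite field of cardinality q^n, let F ⊆ k[X] be finite, and set E = F̄_f ⊆ S. Then for every h ∈ S there exists g ∈ k[X] with deg(g) < q^n such that h − ḡ ∈ V_{E, deg(h)}. -/

import Mathlib

open MvPolynomial

/-- `V_{E,d}`: the smallest `k`-subspace of the polynomial ring containing every `f ∈ E`
of total degree at most `d` and closed under multiplication by ring elements
as long as the degree stays at most `d`. -/
noncomputable def Vspace {k : Type*} [Field k] {σ : Type*} (E : Finset (MvPolynomial σ k)) (d : ℕ) :
    Submodule k (MvPolynomial σ k) :=
  sInf {W | (∀ f ∈ E, f.totalDegree ≤ d → f ∈ W) ∧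
            ∀ g ∈ W, ∀ h : MvPolynomial σ k, (g * h).totalDegree ≤ d → g * h ∈ W}

/-- The reduced exponent `e'` determined by `X^{e'} = X^e mod (X^{q^n} - X)`:
`e' = e` if `e < q^n`, and otherwise `e'` is the representative of `e` modulo `q^n - 1`
lying in `{1, …, q^n - 1}`. -/
def reduceExp (q n e : ℕ) : ℕ :=
  if e < q ^ n then e
  else if (q ^ n - 1) ∣ e then q ^ n - 1 else e % (q ^ n - 1)

/-- The exponent vector of `overline{X^e}`: the base-`q` digits of the reduced exponent. -/
noncomputable def expVec (q n e : ℕ) : Fin n →₀ ℕ :=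
  Finsupp.equivFunOnFinite.symm fun j : Fin n => reduceExp q n e / q ^ (j : ℕ) % q

/-- The fake Weil descent map `f ↦ f̄` from `k[X]` to `k[X_0, …, X_{n-1}]`, the `k`-linear
extension of `X^e ↦ overline{X^e} = X_0^{e'_0} ⋯ X_{n-1}^{e'_{n-1}}`. -/
noncomputable def fakeWeil {k : Type*} [Field k] (q n : ℕ) (f : Polynomial k) :
    MvPolynomial (Fin n) k :=
  f.sum fun e c => MvPolynomial.monomial (expVec q n e) c

/-- The fake Weil descent system `F̄_f` of a finite set `F ⊆ k[X]`:
`{f̄ : f ∈ F} ∪ {X_0^q - X_1, …, X_{n-2}^q - X_{n-1}, X_{n-1}^q - X_0}`. -/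
noncomputable def fakeWeilSystem {k : Type*} [Field k] [DecidableEq k] (q n : ℕ) [NeZero n]
    (F : Finset (Polynomial k)) : Finset (MvPolynomial (Fin n) k) :=
  F.image (fakeWeil q n) ∪
    Finset.image (fun i : Fin n => X i ^ q - X (i + 1)) Finset.univ

/-- The weight of a natural number: its digit sum in base `q`. -/
def wNat (q e : ℕ) : ℕ := (Nat.digits q e).sum

/-- The weight of a univariate polynomial: the maximal weight of an exponent appearing in it. -/
def wPoly {k : Type*} [Field k] (q : ℕ) (f : Polynomial k) : ℕ :=
  f.support.sup fun e => wNat q e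

section Aux

variable {k : Type*} [Field k]

lemma mem_Vspace_of_mem {σ : Type*} {E : Finset (MvPolynomial σ k)} {d : ℕ}
    {f : MvPolynomial σ k} (hf : f ∈ E) (hd : f.totalDegree ≤ d) : f ∈ Vspace E d :=
  Submodule.mem_sInf.2 fun _ hW => hW.1 f hf hd

lemma Vspace_mul_mem {σ : Type*} {E : Finset (MvPolynomial σ k)} {d : ℕ}
    {g : MvPolynomial σ k} (hg : g ∈ Vspace E d) (h : MvPolynomial σ k)
    (hd : (g * h).totalDegree ≤ d) : g * h ∈ Vspace E d :=
  Submodule.mem_sInf.2 fun W hW => hW.2 g (Submodule.mem_sInf.1 hg W hW) h hd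

lemma digit_lemma (q : ℕ) (hq2 : 2 ≤ q) :
    ∀ (n : ℕ) (v : Fin n → ℕ), (∀ j, v j < q) →
    (∑ j, v j * q ^ (j : ℕ)) < q ^ n ∧
      ∀ j : Fin n, (∑ i, v i * q ^ (i : ℕ)) / q ^ (j : ℕ) % q = v j := by
  intro n
  induction n with
  | zero => intro v _; simp
  | succ m ih =>
    intro v hv
    obtain ⟨h1, h2⟩ := ih (fun i => v i.succ) (fun i => hv i.succ)
    have hsum : (∑ j : Fin (m + 1), v j * q ^ (j : ℕ))
        = v 0 + q * ∑ i : Fin m, v i.succ * q ^ (i : ℕ) := by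
      rw [Fin.sum_univ_succ, Finset.mul_sum]
      simp only [Fin.val_zero, pow_zero, mul_one, Fin.val_succ, pow_succ]
      congr 1
      refine Finset.sum_congr rfl fun i _ => ?_
      ring
    set e' := ∑ i : Fin m, v i.succ * q ^ (i : ℕ) with he'
    constructor
    · rw [hsum]
      have hv0 : v 0 < q := hv 0
      have : v 0 + q * e' < q * (e' + 1) := by nlinarith
      have h3 : q * (e' + 1) ≤ q * q ^ m := Nat.mul_le_mul_left q h1
      calc v 0 + q * e' < q * (e' + 1) := this
        _ ≤ q * q ^ m := h3
        _ = q ^ (m + 1) := by ring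
    · intro j
      rw [hsum]
      refine Fin.cases ?_ ?_ j
      · simp only [Fin.val_zero, pow_zero, Nat.div_one]
        rw [Nat.add_mul_mod_self_left, Nat.mod_eq_of_lt (hv 0)]
      · intro i
        have hq0 : 0 < q := by omega
        rw [Fin.val_succ, pow_succ, mul_comm (q ^ (i : ℕ)) q, ← Nat.div_div_eq_div_mul,
          Nat.add_mul_div_left _ _ hq0, Nat.div_eq_of_lt (hv 0), zero_add]
        exact h2 i

lemma fakeWeil_monomial (q n : ℕ) (e : ℕ) (c : k) :
    fakeWeil q n (Polynomial.monomial e c) = MvPolynomial.monomial (expVec q n e) c := by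
  unfold fakeWeil
  rw [Polynomial.sum_monomial_index]
  simp

lemma fakeWeil_zero (q n : ℕ) : fakeWeil q n (0 : Polynomial k) = 0 := by
  unfold fakeWeil; simp [Polynomial.sum_zero_index]

lemma fakeWeil_add (q n : ℕ) (f g : Polynomial k) :
    fakeWeil q n (f + g) = fakeWeil q n f + fakeWeil q n g := by
  unfold fakeWeil
  apply Polynomial.sum_add_index <;> simp

lemma fakeWeil_sum {ι : Type*} (q n : ℕ) (s : Finset ι) (f : ι → Polynomial k) :
    fakeWeil q n (∑ i ∈ s, f i) = ∑ i ∈ s, fakeWeil q n (f i) := by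
  classical
  induction s using Finset.induction with
  | empty => simp [fakeWeil_zero]
  | insert _ _ hx ih => simp [Finset.sum_insert hx, fakeWeil_add, ih]

lemma apply_le_fsum {n : ℕ} (u : Fin n →₀ ℕ) (j : Fin n) :
    u j ≤ u.sum fun _ e => e := by
  by_cases h : u j = 0
  · simp [h]
  · exact Finset.single_le_sum (f := fun a => u a) (fun _ _ => Nat.zero_le _)
      (Finsupp.mem_support_iff.2 h)

lemma key_base {n : ℕ} (q : ℕ) (hq2 : 2 ≤ q) (u : Fin n →₀ ℕ) (c : k)
    (hlt : ∀ j : Fin n, u j < q) :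
    ∃ g : Polynomial k, g.natDegree < q ^ n ∧ fakeWeil q n g = MvPolynomial.monomial u c := by
  obtain ⟨h1, h2⟩ := digit_lemma q hq2 n (fun j => u j) hlt
  refine ⟨Polynomial.monomial (∑ j : Fin n, u j * q ^ (j : ℕ)) c,
    lt_of_le_of_lt (Polynomial.natDegree_monomial_le c) h1, ?_⟩
  rw [fakeWeil_monomial]
  have hv : expVec q n (∑ j : Fin n, u j * q ^ (j : ℕ)) = u := by
    refine Finsupp.ext fun j => ?_
    simp only [expVec, Finsupp.coe_equivFunOnFinite_symm]
    rw [reduceExp, if_pos h1]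
    exact h2 j
  rw [hv]

lemma key {k : Type*} [Field k] [DecidableEq k] (q n : ℕ) (hq2 : 2 ≤ q) [NeZero n]
    (F : Finset (Polynomial k)) (d : ℕ) :
    ∀ (N : ℕ) (u : Fin n →₀ ℕ) (c : k), (u.sum fun _ e => e) ≤ N →
      (u.sum fun _ e => e) ≤ d →
      ∃ g : Polynomial k, g.natDegree < q ^ n ∧
        MvPolynomial.monomial u c - fakeWeil q n g ∈ Vspace (fakeWeilSystem q n F) d := by
  intro N
  induction N with
  | zero =>
    intro u c hN hd
    have hlt : ∀ j : Fin n, u j < q := fun j =>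
      lt_of_le_of_lt (le_trans (apply_le_fsum u j) hN) (by omega)
    obtain ⟨g, hg1, hg2⟩ := key_base q hq2 u c hlt
    exact ⟨g, hg1, by rw [hg2, sub_self]; exact zero_mem _⟩
  | succ m ih =>
    intro u c hN hd
    by_cases hlt : ∀ j : Fin n, u j < q
    · obtain ⟨g, hg1, hg2⟩ := key_base q hq2 u c hlt
      exact ⟨g, hg1, by rw [hg2, sub_self]; exact zero_mem _⟩
    · push_neg at hlt
      obtain ⟨i, hi⟩ := hlt
      set u' := u - Finsupp.single i q with hu'
      have hle : Finsupp.single i q ≤ u := Finsupp.single_le_iff.2 hi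
      have hu : u' + Finsupp.single i q = u := tsub_add_cancel_of_le hle
      set u'' := u' + Finsupp.single (i + 1) 1 with hu''
      have hsum_u : (u.sum fun _ e => e) = (u'.sum fun _ e => e) + q := by
        rw [← hu, Finsupp.sum_add_index' (fun _ => rfl) (fun _ _ _ => rfl),
          Finsupp.sum_single_index rfl]
      have hsum_u'' : (u''.sum fun _ e => e) = (u'.sum fun _ e => e) + 1 := by
        rw [hu'', Finsupp.sum_add_index' (fun _ => rfl) (fun _ _ _ => rfl),
          Finsupp.sum_single_index rfl]
      obtain ⟨g, hg1, hg2⟩ := ih u'' c (by omega) (by omega)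
      have h1 : (X i ^ q : MvPolynomial (Fin n) k) * MvPolynomial.monomial u' c
          = MvPolynomial.monomial u c := by
        rw [X_pow_eq_monomial, monomial_mul, one_mul, add_comm, hu]
      have h2 : (X (i + 1) : MvPolynomial (Fin n) k) * MvPolynomial.monomial u' c
          = MvPolynomial.monomial u'' c := by
        rw [X, monomial_mul, one_mul, add_comm, hu'']
      have hid : (MvPolynomial.monomial u c : MvPolynomial (Fin n) k)
          = (X i ^ q - X (i + 1)) * MvPolynomial.monomial u' c
            + MvPolynomial.monomial u'' c := by
        rw [sub_mul, h1, h2]; ring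
      have hrelE : (X i ^ q - X (i + 1) : MvPolynomial (Fin n) k) ∈ fakeWeilSystem q n F :=
        Finset.mem_union_right _ (Finset.mem_image_of_mem _ (Finset.mem_univ i))
      have hreldeg : (X i ^ q - X (i + 1) : MvPolynomial (Fin n) k).totalDegree ≤ q := by
        rw [sub_eq_add_neg]
        refine le_trans (totalDegree_add _ _) ?_
        rw [totalDegree_neg, totalDegree_X_pow, totalDegree_X]
        omega
      have hqd : q ≤ d := le_trans (le_trans hi (apply_le_fsum u i)) hd
      have hmono : (MvPolynomial.monomial u' c : MvPolynomial (Fin n) k).totalDegree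
          ≤ u'.sum fun _ e => e := by
        by_cases hc : c = 0
        · simp [hc]
        · exact le_of_eq (totalDegree_monomial _ hc)
      have hdeg_prod : ((X i ^ q - X (i + 1)) * MvPolynomial.monomial u' c
          : MvPolynomial (Fin n) k).totalDegree ≤ d := by
        refine le_trans (totalDegree_mul _ _) ?_
        have := hreldeg
        omega
      refine ⟨g, hg1, ?_⟩
      have heq : MvPolynomial.monomial u c - fakeWeil q n g
          = ((X i ^ q - X (i + 1)) * MvPolynomial.monomial u' c)
            + (MvPolynomial.monomial u'' c - fakeWeil q n g) := by
        rw [hid]; ring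
      rw [heq]
      exact Submodule.add_mem _
        (Vspace_mul_mem (mem_Vspace_of_mem hrelE (le_trans hreldeg hqd)) _ hdeg_prod) hg2

end Aux

/-- Every `h ∈ S` is congruent, modulo `V_{E, deg h}` with `E = F̄_f`, to the fake Weil
descent of some univariate polynomial `g` of degree less than `q^n`. -/
theorem exists_fakeWeil_equiv {k : Type*} [Field k] [Fintype k] [DecidableEq k]
    (q n : ℕ) (hq : IsPrimePow q) [NeZero n] (hcard : Fintype.card k = q ^ n)
    (F : Finset (Polynomial k)) (h : MvPolynomial (Fin n) k) :
    ∃ g : Polynomial k, g.natDegree < q ^ n ∧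
      h - fakeWeil q n g ∈ Vspace (fakeWeilSystem q n F) h.totalDegree := by
  classical
  have hq2 : 2 ≤ q := hq.two_le
  set d := h.totalDegree with hd
  have key' : ∀ u ∈ h.support, ∃ g : Polynomial k, g.natDegree < q ^ n ∧
      MvPolynomial.monomial u (h.coeff u) - fakeWeil q n g
        ∈ Vspace (fakeWeilSystem q n F) d := fun u hu =>
    key q n hq2 F d _ u (h.coeff u) le_rfl (le_totalDegree hu)
  choose! G hG1 hG2 using key'
  refine ⟨∑ u ∈ h.support, G u, ?_, ?_⟩
  · have hb : (∑ u ∈ h.support, G u).natDegree ≤ q ^ n - 1 :=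
      Polynomial.natDegree_sum_le_of_forall_le _ _ fun u hu =>
        Nat.le_sub_one_of_lt (hG1 u hu)
    have hpos : 0 < q ^ n := pow_pos (by omega) n
    omega
  · have hdecomp : (∑ u ∈ h.support, MvPolynomial.monomial u (h.coeff u)) = h :=
      support_sum_monomial_coeff h
    have heq : h - fakeWeil q n (∑ u ∈ h.support, G u)
        = ∑ u ∈ h.support,
            (MvPolynomial.monomial u (h.coeff u) - fakeWeil q n (G u)) := by
      rw [fakeWeil_sum, Finset.sum_sub_distrib, hdecomp]
    rw [heq]
    exact Submodule.sum_mem _ fun u hu => hG2 u hu
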